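/- Let G be the graph on two vertices v₁, v₂ joined by r ≥ 1 parallel edges, f = 1 + r_BN its Baker-Norine rank plus one, and W = 𝔪f. Then W(d) = 1 if d is equivalent modulo the image of the Laplacian (i.e., modulo integer multiples of (r,-r)) to (i,i) for some i ∈ {0,…,r-1}, and W(d) = 0 otherwise. -/

import Mathlib

set_option maxHeartbeats 1600000

open scoped BigOperators

def deg {n : ℕ} (d : Fin n → ℤ) : ℤ := ∑ i, d i

def InitiallyZero {n : ℕ} (f : (Fin n → ℤ) → ℤ) : Prop :=
  ∃ a : ℤ, ∀ d, deg d ≤ a → f d = 0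

def eI {n : ℕ} (I : Finset (Fin n)) : Fin n → ℤ := fun i => if i ∈ I then 1 else 0

def stdB {n : ℕ} (i : Fin n) : Fin n → ℤ := fun j => if j = i then 1 else 0

def mob {n : ℕ} (f : (Fin n → ℤ) → ℤ) : (Fin n → ℤ) → ℤ :=
  fun d => ∑ I : Finset (Fin n), (-1) ^ I.card * f (d - eI I)

def Modular {n : ℕ} (h : (Fin n → ℤ) → ℤ) : Prop := ∀ d, mob h d = 0

noncomputable def distTo {n : ℕ} (N : Set (Fin n → ℤ)) (d : Fin n → ℤ) : ℕ :=
  sInf {k : ℕ | ∃ d' ∈ N, ∑ i, (d i - d' i).natAbs = k}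

def equiv2 (r : ℕ) (d d' : Fin 2 → ℤ) : Prop :=
  ∃ k : ℤ, d 0 - d' 0 = k * r ∧ d 1 - d' 1 = -(k * r)

def N2 (r : ℕ) : Set (Fin 2 → ℤ) :=
  {d | ¬ ∃ d' : Fin 2 → ℤ, (∀ j, 0 ≤ d' j) ∧ equiv2 r d d'}

lemma mob_two (f : (Fin 2 → ℤ) → ℤ) (d : Fin 2 → ℤ) :
    mob f d = f d - f (d - eI {0}) - f (d - eI {1}) + f (d - eI Finset.univ) := by
  have h : (Finset.univ : Finset (Finset (Fin 2))) = {∅, {0}, {1}, Finset.univ} := by decide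
  rw [mob, h]
  rw [Finset.sum_insert (by decide), Finset.sum_insert (by decide),
    Finset.sum_insert (by decide), Finset.sum_singleton]
  have : d - eI (∅ : Finset (Fin 2)) = d := by
    funext i; simp [eI]
  rw [this]
  simp [Finset.card_singleton]
  ring

lemma nonneg_of_decomp {m s r : ℤ} (hr : 0 < r) (hs : s < r) (h : 0 ≤ m * r + s) : 0 ≤ m := by
  by_contra hm
  push_neg at hm
  have h1 : m ≤ -1 := by omega
  nlinarith

lemma mem_N2_iff (r : ℕ) (hr : 1 ≤ r) (d : Fin 2 → ℤ) (q q' s t : ℤ)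
    (h0 : d 0 = q * r + s) (h1 : d 1 = q' * r + t)
    (hs0 : 0 ≤ s) (hs1 : s < r) (ht0 : 0 ≤ t) (ht1 : t < r) :
    d ∈ N2 r ↔ q + q' < 0 := by
  have hrz : (0:ℤ) < r := by exact_mod_cast hr
  constructor
  · intro hd
    by_contra hq
    push_neg at hq
    apply hd
    refine ⟨![s, d 1 + q * r], ?_, q, ?_, ?_⟩
    · intro j
      fin_cases j
      · simpa using hs0
      · simp [h1]
        nlinarith
    · simp [h0]
    · simp [h1]
  · intro hq hd
    obtain ⟨d', hpos, k, hk0, hk1⟩ := hd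
    have e0 : d' 0 = (q - k) * r + s := by rw [h0] at hk0; linarith [hk0]
    have e1 : d' 1 = (q' + k) * r + t := by rw [h1] at hk1; linarith [hk1]
    have p0 : 0 ≤ q - k := nonneg_of_decomp hrz hs1 (by rw [← e0]; exact hpos 0)
    have p1 : 0 ≤ q' + k := nonneg_of_decomp hrz ht1 (by rw [← e1]; exact hpos 1)
    omega

lemma distTo_eq2 (N : Set (Fin 2 → ℤ)) (d : Fin 2 → ℤ) (m : ℤ) (hm : 0 ≤ m)
    (h1 : ∃ d' ∈ N, |d 0 - d' 0| + |d 1 - d' 1| = m)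
    (h2 : ∀ d' ∈ N, m ≤ |d 0 - d' 0| + |d 1 - d' 1|) :
    ((distTo N d : ℕ) : ℤ) = m := by
  have key : ∀ e : Fin 2 → ℤ, ((∑ i, (d i - e i).natAbs : ℕ) : ℤ) = |d 0 - e 0| + |d 1 - e 1| := by
    intro e
    rw [Fin.sum_univ_two]
    push_cast
    rw [Int.abs_eq_natAbs, Int.abs_eq_natAbs]
  obtain ⟨d', hd', he⟩ := h1
  have h1' : ∑ i, (d i - d' i).natAbs = m.toNat := by
    have := key d'
    omega
  have hfin : distTo N d = m.toNat := by
    apply le_antisymm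
    · exact Nat.sInf_le ⟨d', hd', h1'⟩
    · apply le_csInf
      · exact ⟨m.toNat, d', hd', h1'⟩
      rintro k ⟨e, he', rfl⟩
      have hk := h2 e he'
      have := key e
      omega
  rw [hfin]
  omega

lemma f_eq (r : ℕ) (hr : 1 ≤ r) (d : Fin 2 → ℤ) (q q' s t : ℤ)
    (h0 : d 0 = q * r + s) (h1 : d 1 = q' * r + t)
    (hs0 : 0 ≤ s) (hs1 : s < r) (ht0 : 0 ≤ t) (ht1 : t < r) :
    ((distTo (N2 r) d : ℕ) : ℤ) =
      if q + q' < 0 then 0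
      else if q + q' = 0 then min s t + 1
      else s + t + 2 + (q + q' - 1) * r := by
  have hrz : (0:ℤ) < r := by exact_mod_cast hr
  have lower : ∀ d' ∈ N2 r, ∃ j k : ℤ, q + q' + 1 ≤ j + k ∧
      ((1 ≤ j → (j-1)*r + s + 1 ≤ |d 0 - d' 0|)) ∧
      ((1 ≤ k → (k-1)*r + t + 1 ≤ |d 1 - d' 1|)) := by
    intro d' hd'
    have e0 : d' 0 = (d' 0 / r) * r + d' 0 % r := by
      rw [mul_comm]; exact (Int.mul_ediv_add_emod _ _).symm
    have e1 : d' 1 = (d' 1 / r) * r + d' 1 % r := by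
      rw [mul_comm]; exact (Int.mul_ediv_add_emod _ _).symm
    have hsa0 : 0 ≤ d' 0 % r := Int.emod_nonneg _ (by positivity)
    have hsa1 : d' 0 % r < r := Int.emod_lt_of_pos _ hrz
    have hsb0 : 0 ≤ d' 1 % r := Int.emod_nonneg _ (by positivity)
    have hsb1 : d' 1 % r < r := Int.emod_lt_of_pos _ hrz
    have hneg : d' 0 / r + d' 1 / r < 0 :=
      (mem_N2_iff r hr d' _ _ _ _ e0 e1 hsa0 hsa1 hsb0 hsb1).1 hd'
    refine ⟨q - d' 0 / r, q' - d' 1 / r, by omega, ?_, ?_⟩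
    · intro hj
      have hu : d 0 - d' 0 = (q - d' 0 / r) * r + (s - d' 0 % r) := by
        rw [h0]; linear_combination -e0
      have : (q - d' 0 / r - 1) * r + s + 1 ≤ d 0 - d' 0 := by
        rw [hu]
        have : (q - d' 0 / r - 1) * r = (q - d' 0 / r) * r - r := by ring
        linarith
      exact le_trans this (le_abs_self _)
    · intro hk
      have hu : d 1 - d' 1 = (q' - d' 1 / r) * r + (t - d' 1 % r) := by
        rw [h1]; linear_combination -e1
      have : (q' - d' 1 / r - 1) * r + t + 1 ≤ d 1 - d' 1 := by
        rw [hu]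
        have : (q' - d' 1 / r - 1) * r = (q' - d' 1 / r) * r - r := by ring
        linarith
      exact le_trans this (le_abs_self _)
  rcases lt_trichotomy (q + q') 0 with hQ | hQ | hQ
  · rw [if_pos hQ]
    apply distTo_eq2 _ _ _ le_rfl
    · exact ⟨d, (mem_N2_iff r hr d q q' s t h0 h1 hs0 hs1 ht0 ht1).2 hQ, by simp⟩
    · intro d' _
      positivity
  · rw [if_neg (by omega), if_pos hQ]
    apply distTo_eq2 _ _ _ (by omega)
    · rcases le_total s t with hst | hst
      · refine ⟨![(q-1) * r + (r-1), d 1], ?_, ?_⟩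
        · exact (mem_N2_iff r hr _ (q-1) q' (r-1) t (by simp) (by simp [h1])
            (by omega) (by omega) ht0 ht1).2 (by omega)
        · have : d 0 - ((q-1) * r + (r-1)) = s + 1 := by rw [h0]; ring
          simp only [Matrix.cons_val_zero, Matrix.cons_val_one, Matrix.head_cons]
          rw [this, sub_self, abs_zero, abs_of_nonneg (by omega)]
          omega
      · refine ⟨![d 0, (q'-1) * r + (r-1)], ?_, ?_⟩
        · exact (mem_N2_iff r hr _ q (q'-1) s (r-1) (by simp [h0]) (by simp)
            hs0 hs1 (by omega) (by omega)).2 (by omega)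
        · have : d 1 - ((q'-1) * r + (r-1)) = t + 1 := by rw [h1]; ring
          simp only [Matrix.cons_val_zero, Matrix.cons_val_one, Matrix.head_cons]
          rw [this, sub_self, abs_zero, abs_of_nonneg (by omega)]
          omega
    · intro d' hd'
      obtain ⟨j, k, hjk, hj, hk⟩ := lower d' hd'
      rcases (by omega : 1 ≤ j ∨ 1 ≤ k) with h | h
      · have hbound := hj h
        have hnn : (0:ℤ) ≤ (j-1) * r := mul_nonneg (by omega) hrz.le
        have := abs_nonneg (d 1 - d' 1)
        have := min_le_left s t
        linarith
      · have hbound := hk h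
        have hnn : (0:ℤ) ≤ (k-1) * r := mul_nonneg (by omega) hrz.le
        have := abs_nonneg (d 0 - d' 0)
        have := min_le_right s t
        linarith
  · rw [if_neg (by omega), if_neg (by omega)]
    have hQr : (0:ℤ) ≤ (q + q' - 1) * r := mul_nonneg (by omega) hrz.le
    apply distTo_eq2 _ _ _ (by linarith)
    · refine ⟨![(q-1) * r + (r-1), (q' - (q+q')) * r + (r-1)], ?_, ?_⟩
      · exact (mem_N2_iff r hr _ (q-1) (q' - (q+q')) (r-1) (r-1) (by simp) (by simp)
          (by omega) (by omega) (by omega) (by omega)).2 (by omega)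
      · have e0 : d 0 - ((q-1) * r + (r-1)) = s + 1 := by rw [h0]; ring
        have e1 : d 1 - ((q' - (q+q')) * r + (r-1)) = (q + q' - 1) * r + t + 1 := by
          rw [h1]; ring
        simp only [Matrix.cons_val_zero, Matrix.cons_val_one, Matrix.head_cons]
        rw [e0, e1, abs_of_nonneg (by omega), abs_of_nonneg (by linarith)]
        ring
    · intro d' hd'
      obtain ⟨j, k, hjk, hj, hk⟩ := lower d' hd'
      by_cases h1j : 1 ≤ j
      · by_cases h1k : 1 ≤ k
        · have hb1 := hj h1j
          have hb2 := hk h1k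
          have hmul : (q + q' - 1) * r ≤ (j + k - 2) * r :=
            mul_le_mul_of_nonneg_right (by omega) hrz.le
          have : (j + k - 2) * r = (j-1)*r + (k-1)*r := by ring
          linarith
        · have hb1 := hj h1j
          have hmul : (q + q') * r ≤ (j - 1) * r :=
            mul_le_mul_of_nonneg_right (by omega) hrz.le
          have : (q + q') * r = (q + q' - 1) * r + r := by ring
          have := abs_nonneg (d 1 - d' 1)
          linarith
      · have h1k : 1 ≤ k := by omega
        have hb2 := hk h1k
        have hmul : (q + q') * r ≤ (k - 1) * r :=
          mul_le_mul_of_nonneg_right (by omega) hrz.le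
        have : (q + q') * r = (q + q' - 1) * r + r := by ring
        have := abs_nonneg (d 0 - d' 0)
        linarith

lemma small_mul_aux {x m r : ℤ} (hr : 0 < r) (h : x = m * r) (h1 : -r < x) (h2 : x < r) :
    x = 0 ∧ m = 0 := by
  rcases lt_trichotomy m 0 with hm | hm | hm
  · nlinarith
  · constructor <;> simp [hm] at h ⊢ <;> omega
  · nlinarith

lemma equiv_char (r : ℕ) (hr : 1 ≤ r) (d : Fin 2 → ℤ) (q q' s t : ℤ)
    (h0 : d 0 = q * r + s) (h1 : d 1 = q' * r + t)
    (hs0 : 0 ≤ s) (hs1 : s < r) (ht0 : 0 ≤ t) (ht1 : t < r) :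
    (∃ i : ℕ, i < r ∧ equiv2 r d (fun _ => (i : ℤ))) ↔ (q + q' = 0 ∧ s = t) := by
  have hrz : (0:ℤ) < r := by exact_mod_cast hr
  constructor
  · rintro ⟨i, hi, k, hk0, hk1⟩
    simp only at hk0 hk1
    have hiz : (0:ℤ) ≤ i := Int.natCast_nonneg i
    have hir : (i:ℤ) < r := by exact_mod_cast hi
    have e1 : s - i = (k - q) * r := by rw [h0] at hk0; linarith [hk0]
    have ⟨es, ek⟩ := small_mul_aux hrz e1 (by omega) (by omega)
    have hk : k = q := by omega
    have e2 : t - i = -(q + q') * r := by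
      rw [h1, hk] at hk1; linarith [hk1]
    have ⟨et, eQ⟩ := small_mul_aux hrz e2 (by omega) (by omega)
    omega
  · rintro ⟨hQ, hst⟩
    refine ⟨s.toNat, by omega, q, ?_, ?_⟩
    · simp only
      rw [h0, Int.toNat_of_nonneg hs0]
      ring
    · simp only
      rw [h1, Int.toNat_of_nonneg hs0]
      have : q' = -q := by omega
      rw [this, ← hst]
      ring

lemma W_val (r : ℕ) (hr : 1 ≤ r) (d : Fin 2 → ℤ) (q q' s t : ℤ)
    (h0 : d 0 = q * r + s) (h1 : d 1 = q' * r + t)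
    (hs0 : 0 ≤ s) (hs1 : s < r) (ht0 : 0 ≤ t) (ht1 : t < r) :
    mob (fun x => (distTo (N2 r) x : ℤ)) d = if q + q' = 0 ∧ s = t then 1 else 0 := by
  have hrz : (0:ℤ) < r := by exact_mod_cast hr
  have c10 : (d - eI ({0} : Finset (Fin 2))) 0 = d 0 - 1 := by simp [eI]
  have c11 : (d - eI ({0} : Finset (Fin 2))) 1 = d 1 := by
    simp [eI, show (1 : Fin 2) ≠ 0 by decide]
  have c20 : (d - eI ({1} : Finset (Fin 2))) 0 = d 0 := by
    simp [eI, show (0 : Fin 2) ≠ 1 by decide]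
  have c21 : (d - eI ({1} : Finset (Fin 2))) 1 = d 1 - 1 := by simp [eI]
  have c30 : (d - eI (Finset.univ : Finset (Fin 2))) 0 = d 0 - 1 := by simp [eI]
  have c31 : (d - eI (Finset.univ : Finset (Fin 2))) 1 = d 1 - 1 := by simp [eI]
  rw [mob_two]
  by_cases hs : s = 0
  · subst hs
    by_cases ht : t = 0
    · subst ht
      have A := f_eq r hr d q q' 0 0 h0 h1 hs0 hs1 ht0 ht1
      have B := f_eq r hr (d - eI ({0} : Finset (Fin 2))) (q-1) q' (r-1) 0 (by rw [c10, h0]; ring) (by rw [c11, h1])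
        (by omega) (by omega) ht0 ht1
      have C := f_eq r hr (d - eI ({1} : Finset (Fin 2))) q (q'-1) 0 (r-1) (by rw [c20, h0]) (by rw [c21, h1]; ring)
        hs0 hs1 (by omega) (by omega)
      have D := f_eq r hr (d - eI (Finset.univ : Finset (Fin 2))) (q-1) (q'-1) (r-1) (r-1) (by rw [c30, h0]; ring)
        (by rw [c31, h1]; ring) (by omega) (by omega) (by omega) (by omega)
      rw [min_self] at A
      rw [min_eq_right (show (0:ℤ) ≤ r-1 by omega)] at B
      rw [min_eq_left (show (0:ℤ) ≤ r-1 by omega)] at C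
      rw [min_self] at D
      rw [A, B, C, D]
      rcases (show q + q' ≤ -1 ∨ q + q' = 0 ∨ q + q' = 1 ∨ q + q' = 2 ∨ 3 ≤ q + q' by omega)
        with hQ | hQ | hQ | hQ | hQ
      · split_ifs <;> first | omega | ring
      · have hq' : q' = -q := by omega
        subst hq'
        split_ifs <;> first | omega | ring
      · have hq' : q' = 1 - q := by omega
        subst hq'
        split_ifs <;> first | omega | ring
      · have hq' : q' = 2 - q := by omega
        subst hq'
        split_ifs <;> first | omega | ring
      · split_ifs <;> first | omega | ring
    · have A := f_eq r hr d q q' 0 t h0 h1 hs0 hs1 ht0 ht1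
      have B := f_eq r hr (d - eI ({0} : Finset (Fin 2))) (q-1) q' (r-1) t (by rw [c10, h0]; ring) (by rw [c11, h1])
        (by omega) (by omega) ht0 ht1
      have C := f_eq r hr (d - eI ({1} : Finset (Fin 2))) q q' 0 (t-1) (by rw [c20, h0]) (by rw [c21, h1]; ring)
        hs0 hs1 (by omega) (by omega)
      have D := f_eq r hr (d - eI (Finset.univ : Finset (Fin 2))) (q-1) q' (r-1) (t-1) (by rw [c30, h0]; ring)
        (by rw [c31, h1]; ring) (by omega) (by omega) (by omega) (by omega)
      rw [min_eq_left ht0] at A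
      rw [min_eq_right (show t ≤ r-1 by omega)] at B
      rw [min_eq_left (show (0:ℤ) ≤ t-1 by omega)] at C
      rw [min_eq_right (show t-1 ≤ r-1 by omega)] at D
      rw [A, B, C, D]
      rcases (show q + q' ≤ -1 ∨ q + q' = 0 ∨ q + q' = 1 ∨ 2 ≤ q + q' by omega)
        with hQ | hQ | hQ | hQ
      · split_ifs <;> first | omega | ring
      · have hq' : q' = -q := by omega
        subst hq'
        split_ifs <;> first | omega | ring
      · have hq' : q' = 1 - q := by omega
        subst hq'
        split_ifs <;> first | omega | ring
      · split_ifs <;> first | omega | ring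
  · by_cases ht : t = 0
    · subst ht
      have A := f_eq r hr d q q' s 0 h0 h1 hs0 hs1 ht0 ht1
      have B := f_eq r hr (d - eI ({0} : Finset (Fin 2))) q q' (s-1) 0 (by rw [c10, h0]; ring) (by rw [c11, h1])
        (by omega) (by omega) ht0 ht1
      have C := f_eq r hr (d - eI ({1} : Finset (Fin 2))) q (q'-1) s (r-1) (by rw [c20, h0]) (by rw [c21, h1]; ring)
        hs0 hs1 (by omega) (by omega)
      have D := f_eq r hr (d - eI (Finset.univ : Finset (Fin 2))) q (q'-1) (s-1) (r-1) (by rw [c30, h0]; ring)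
        (by rw [c31, h1]; ring) (by omega) (by omega) (by omega) (by omega)
      rw [min_eq_right hs0] at A
      rw [min_eq_right (show (0:ℤ) ≤ s-1 by omega)] at B
      rw [min_eq_left (show s ≤ r-1 by omega)] at C
      rw [min_eq_left (show s-1 ≤ r-1 by omega)] at D
      rw [A, B, C, D]
      rcases (show q + q' ≤ -1 ∨ q + q' = 0 ∨ q + q' = 1 ∨ 2 ≤ q + q' by omega)
        with hQ | hQ | hQ | hQ
      · split_ifs <;> first | omega | ring
      · have hq' : q' = -q := by omega
        subst hq'
        split_ifs <;> first | omega | ring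
      · have hq' : q' = 1 - q := by omega
        subst hq'
        split_ifs <;> first | omega | ring
      · split_ifs <;> first | omega | ring
    · have A := f_eq r hr d q q' s t h0 h1 hs0 hs1 ht0 ht1
      have B := f_eq r hr (d - eI ({0} : Finset (Fin 2))) q q' (s-1) t (by rw [c10, h0]; ring) (by rw [c11, h1])
        (by omega) (by omega) ht0 ht1
      have C := f_eq r hr (d - eI ({1} : Finset (Fin 2))) q q' s (t-1) (by rw [c20, h0]) (by rw [c21, h1]; ring)
        hs0 hs1 (by omega) (by omega)
      have D := f_eq r hr (d - eI (Finset.univ : Finset (Fin 2))) q q' (s-1) (t-1) (by rw [c30, h0]; ring)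
        (by rw [c31, h1]; ring) (by omega) (by omega) (by omega) (by omega)
      rcases lt_trichotomy s t with hst | hst | hst
      · rw [min_eq_left (by omega : s ≤ t)] at A
        rw [min_eq_left (by omega : s - 1 ≤ t)] at B
        rw [min_eq_left (by omega : s ≤ t - 1)] at C
        rw [min_eq_left (by omega : s - 1 ≤ t - 1)] at D
        rw [A, B, C, D]
        rcases (show q + q' ≤ -1 ∨ q + q' = 0 ∨ 1 ≤ q + q' by omega) with hQ | hQ | hQ
        · split_ifs <;> first | omega | ring
        · have hq' : q' = -q := by omega
          subst hq'
          split_ifs <;> first | omega | ring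
        · split_ifs <;> first | omega | ring
      · subst hst
        rw [min_self] at A
        rw [min_eq_left (by omega : s - 1 ≤ s)] at B
        rw [min_eq_right (by omega : s - 1 ≤ s)] at C
        rw [min_self] at D
        rw [A, B, C, D]
        rcases (show q + q' ≤ -1 ∨ q + q' = 0 ∨ 1 ≤ q + q' by omega) with hQ | hQ | hQ
        · split_ifs <;> first | omega | ring
        · have hq' : q' = -q := by omega
          subst hq'
          split_ifs <;> first | omega | ring
        · split_ifs <;> first | omega | ring
      · rw [min_eq_right (by omega : t ≤ s)] at A
        rw [min_eq_right (by omega : t ≤ s - 1)] at B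
        rw [min_eq_right (by omega : t - 1 ≤ s)] at C
        rw [min_eq_right (by omega : t - 1 ≤ s - 1)] at D
        rw [A, B, C, D]
        rcases (show q + q' ≤ -1 ∨ q + q' = 0 ∨ 1 ≤ q + q' by omega) with hQ | hQ | hQ
        · split_ifs <;> first | omega | ring
        · have hq' : q' = -q := by omega
          subst hq'
          split_ifs <;> first | omega | ring
        · split_ifs <;> first | omega | ring

theorem stmt15 (r : ℕ) (hr : 1 ≤ r) :
    ∀ d : Fin 2 → ℤ,
      ((∃ i : ℕ, i < r ∧ equiv2 r d (fun _ => (i : ℤ))) →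
        mob (fun x => (distTo (N2 r) x : ℤ)) d = 1) ∧
      (¬ (∃ i : ℕ, i < r ∧ equiv2 r d (fun _ => (i : ℤ))) →
        mob (fun x => (distTo (N2 r) x : ℤ)) d = 0) := by
  intro d
  have hrz : (0:ℤ) < r := by exact_mod_cast hr
  have e0 : d 0 = (d 0 / r) * r + d 0 % r := by
    rw [mul_comm]; exact (Int.mul_ediv_add_emod _ _).symm
  have e1 : d 1 = (d 1 / r) * r + d 1 % r := by
    rw [mul_comm]; exact (Int.mul_ediv_add_emod _ _).symm
  have b1 : 0 ≤ d 0 % r := Int.emod_nonneg _ (by positivity)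
  have b2 : d 0 % r < r := Int.emod_lt_of_pos _ hrz
  have b3 : 0 ≤ d 1 % r := Int.emod_nonneg _ (by positivity)
  have b4 : d 1 % r < r := Int.emod_lt_of_pos _ hrz
  have hW := W_val r hr d _ _ _ _ e0 e1 b1 b2 b3 b4
  have hchar := equiv_char r hr d _ _ _ _ e0 e1 b1 b2 b3 b4
  constructor
  · intro h
    rw [hW, if_pos (hchar.1 h)]
  · intro h
    rw [hW, if_neg (fun hc => h (hchar.2 hc))]
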